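/- In the undirected 5-cycle construction with cross-cycle edges from C_i to C_{i+1} of weight 1/3^{i-1} and cycle-C_i edges of weight 1/3^i, each canonical 3-edge path (cross-cycle edge from v_i^k to v_{i+1}^j, then two cycle edges of C_{i+1}) of weight 1/3^{i-1} + 2/3^{i+1} is the unique (13/12)-approximate shortest path between its endpoints: every other path P' between the same endpoints satisfies w(P') > (13/12)·(1/3^{i-1} + 2/3^{i+1}). -/

import Mathlib

/-- The weight of a path (list of vertices): sum of weights of consecutive edges. -/
def pathWeight {V : Type} (w : V → V → ℝ) : List V → ℝ
  | [] => 0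
  | [_] => 0
  | a :: b :: rest => w a b + pathWeight w (b :: rest)

/-- A nonempty list of vertices is a path if consecutive vertices are joined by edges. -/
def IsPath {V : Type} (E : V → V → Prop) : List V → Prop
  | [] => False
  | [_] => True
  | a :: b :: rest => E a b ∧ IsPath E (b :: rest)

/-- `p` is a shortest path: it is a path, and no path with the same endpoints is shorter. -/
def IsShortestPath {V : Type} (E : V → V → Prop) (w : V → V → ℝ) (p : List V) : Prop :=
  IsPath E p ∧ ∀ q : List V, IsPath E q → q.head? = p.head? → q.getLast? = p.getLast? →
    pathWeight w p ≤ pathWeight w q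

/-- Cross-edge pattern of the undirected construction: the cross edge from
v_i^k goes to v_{i+1}^{2k} (superscripts mod 5). -/
def cross5 (k : Fin 5) : Fin 5 := 2 * k

/-- Edges (symmetric) of the undirected lower-bound construction: the 5-cycle
edges of C_i (1 ≤ i ≤ m) and the cross-cycle edges v_i^k — v_{i+1}^{2k}. -/
def undirE (m : ℕ) (u v : ℕ × Fin 5) : Prop :=
  (u.1 = v.1 ∧ 1 ≤ u.1 ∧ u.1 ≤ m ∧ (v.2 = u.2 + 1 ∨ u.2 = v.2 + 1)) ∨
  (v.1 = u.1 + 1 ∧ 1 ≤ u.1 ∧ u.1 + 1 ≤ m ∧ v.2 = cross5 u.2) ∨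
  (u.1 = v.1 + 1 ∧ 1 ≤ v.1 ∧ v.1 + 1 ≤ m ∧ u.2 = cross5 v.2)

/-- Weights for the approximate undirected construction: edges of C_i weigh
1/3^i, cross-cycle edges between C_i and C_{i+1} weigh 1/3^{i-1}. -/
noncomputable def undirW18 (u v : ℕ × Fin 5) : ℝ :=
  if u.1 = v.1 then (1 : ℝ) / 3 ^ u.1 else (1 : ℝ) / 3 ^ (min u.1 v.1 - 1)

open Fin.CommRing

/-! ### Auxiliary machinery for stmt18 -/

/-- Potential table on cycle `C_i`, indexed by offset from `k`. -/
def s18cI : Fin 5 → ℤ := fun d =>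
  if d = 0 then 11 else if d = 1 then 9 else if d = 2 then 11 else 10

/-- Potential table on cycle `C_{i+1}`, indexed by offset from `2k`. -/
def s18cJ : Fin 5 → ℤ := fun e =>
  if e = 0 then 2 else if e = 1 then 1 else if e = 2 then 0 else if e = 3 then 1 else 2

lemma s18cI_ge : ∀ d : Fin 5, 9 ≤ s18cI d := by decide
lemma s18cI_le : ∀ d : Fin 5, s18cI d ≤ 11 := by decide
lemma s18cJ_ge : ∀ e : Fin 5, 0 ≤ s18cJ e := by decide
lemma s18cJ_le : ∀ e : Fin 5, s18cJ e ≤ 2 := by decide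
lemma s18cI_step : ∀ d : Fin 5, s18cI d - s18cI (d+1) ≤ 2 ∧ s18cI (d+1) - s18cI d ≤ 2 := by decide
lemma s18cJ_step : ∀ e : Fin 5, s18cJ e - s18cJ (e+1) ≤ 1 ∧ s18cJ (e+1) - s18cJ e ≤ 1 := by decide
lemma s18cJ_stepA : ∀ e : Fin 5, s18cJ e - s18cJ (e+1) ≤ 0 ∨ (e = 0 ∧ e+1 = 1) ∨ (e = 1 ∧ e+1 = 2) := by decide
lemma s18cJ_stepB : ∀ e : Fin 5, s18cJ (e+1) - s18cJ e ≤ 0 ∨ (e+1 = 3 ∧ e = 2) ∨ (e+1 = 4 ∧ e = 3) := by decide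
lemma s18cross : ∀ d : Fin 5, s18cI d - s18cJ (2*d) = 9 := by decide
lemma s18fin_solve : ∀ x w : Fin 5, 2*x = w → x = 3*w := by decide
lemma s18fin_tab : ∀ k : Fin 5, 3*(2*k+2) = k+1 ∧ 3*(2*k+1) = k+3 ∧ 3*(2*k) = k ∧
    3*(2*k+3) = k+4 ∧ 3*(2*k+4) = k+2 := by decide
lemma s18fin_sub : ∀ a b c : Fin 5, a - b = c → a = b + c := by decide
lemma s18fin_ne : ∀ k : Fin 5, k+1 ≠ k ∧ k+2 ≠ k ∧ k+3 ≠ k ∧ k+4 ≠ k := by decide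

/-- The potential function: scaled distance to the target `(i+1, 2k+2)`. -/
noncomputable def s18phi (i : ℕ) (k : Fin 5) (u : ℕ × Fin 5) : ℝ :=
  (if u.1 = i then (s18cI (u.2 - k) : ℝ) else if u.1 = i+1 then (s18cJ (u.2 - 2*k) : ℝ) else 0)
    / 3^(i+1)

lemma s18phi_i (i : ℕ) (k x : Fin 5) : s18phi i k (i, x) = (s18cI (x - k) : ℝ)/3^(i+1) := by
  simp [s18phi]

lemma s18phi_i1 (i : ℕ) (k y : Fin 5) :
    s18phi i k (i+1, y) = (s18cJ (y - 2*k) : ℝ)/3^(i+1) := by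
  simp [s18phi, Nat.succ_ne_self]

lemma s18phi_other (i a : ℕ) (k : Fin 5) (x : Fin 5) (h1 : a ≠ i) (h2 : a ≠ i+1) :
    s18phi i k (a, x) = 0 := by
  simp [s18phi, h1, h2]

/-- Tight arcs: the cross arcs out of `C_i` and four cycle arcs of `C_{i+1}`. -/
def s18tight (i : ℕ) (k : Fin 5) (u v : ℕ × Fin 5) : Prop :=
  (u.1 = i ∧ v = (i+1, 2*u.2)) ∨
  (u.1 = i+1 ∧ v.1 = i+1 ∧
    ((u.2 - 2*k = 0 ∧ v.2 - 2*k = 1) ∨ (u.2 - 2*k = 1 ∧ v.2 - 2*k = 2) ∨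
     (u.2 - 2*k = 3 ∧ v.2 - 2*k = 2) ∨ (u.2 - 2*k = 4 ∧ v.2 - 2*k = 3)))

/-- The ten walks made of tight arcs ending at the target. -/
def s18Ten (i : ℕ) (k : Fin 5) (q : List (ℕ × Fin 5)) : Prop :=
  q = [(i+1, 2*k+2)] ∨
  q = [(i+1, 2*k+1), (i+1, 2*k+2)] ∨
  q = [(i+1, 2*k), (i+1, 2*k+1), (i+1, 2*k+2)] ∨
  q = [(i, k), (i+1, 2*k), (i+1, 2*k+1), (i+1, 2*k+2)] ∨
  q = [(i, k+3), (i+1, 2*k+1), (i+1, 2*k+2)] ∨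
  q = [(i, k+1), (i+1, 2*k+2)] ∨
  q = [(i+1, 2*k+3), (i+1, 2*k+2)] ∨
  q = [(i+1, 2*k+4), (i+1, 2*k+3), (i+1, 2*k+2)] ∨
  q = [(i, k+4), (i+1, 2*k+3), (i+1, 2*k+2)] ∨
  q = [(i, k+2), (i+1, 2*k+4), (i+1, 2*k+3), (i+1, 2*k+2)]

lemma s18div (i j : ℕ) (A : ℝ) (hj : j ≤ i + 1) (hA : A ≤ 3^(i+1-j)) :
    A / 3^(i+1) ≤ 1 / 3^j := by
  rw [div_le_div_iff₀ (by positivity) (by positivity), one_mul]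
  calc A * 3^j ≤ 3^(i+1-j) * 3^j := by
        exact mul_le_mul_of_nonneg_right hA (by positivity)
    _ = 3^(i+1) := by rw [← pow_add]; congr 1; omega

lemma s18arc (m i : ℕ) (hi : 1 ≤ i) (k : Fin 5) (u v : ℕ × Fin 5) (h : undirE m u v) :
    s18phi i k u - s18phi i k v ≤ undirW18 u v ∧
    (s18phi i k u - s18phi i k v + 1/3^(i+1) ≤ undirW18 u v ∨ s18tight i k u v ∨
      (i+2 ≤ u.1 ∧ i+2 ≤ v.1)) := by
  obtain ⟨a, x⟩ := u
  obtain ⟨b, y⟩ := v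
  have h1P : (0:ℝ) < 1/3^(i+1) := by positivity
  rcases h with ⟨hab, h1a, h1m, hxy⟩ | ⟨hb, h1a, h1m, hy⟩ | ⟨ha, h1b, h1m, hx⟩
  · -- cycle edge at level a
    obtain rfl : a = b := hab
    have hw : undirW18 (a,x) (a,y) = 1/3^a := by simp [undirW18]
    rw [hw]
    by_cases hai : a = i
    · subst hai
      rw [s18phi_i, s18phi_i]
      rcases hxy with h' | h'
      · obtain ⟨d, rfl⟩ : ∃ d, x = k + d := ⟨x - k, by ring⟩
        obtain rfl : y = (k + d) + 1 := h'
        have e0 : (k + d) - k = d := by ring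
        have e1 : ((k + d) + 1) - k = d + 1 := by ring
        rw [e0, e1]
        have hI := s18cI_step d
        have hs : (s18cI d : ℝ)/3^(a+1) - (s18cI (d+1) : ℝ)/3^(a+1) + 1/3^(a+1) ≤ 1/3^a := by
          rw [div_sub_div_same, ← add_div]
          apply s18div a a _ (by omega)
          rw [show a+1-a = 1 by omega]
          push_cast
          have : (s18cI d : ℝ) - (s18cI (d+1) : ℝ) ≤ 2 := by exact_mod_cast hI.1
          norm_num; linarith
        exact ⟨by linarith, Or.inl hs⟩
      · obtain ⟨d, rfl⟩ : ∃ d, y = k + d := ⟨y - k, by ring⟩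
        obtain rfl : x = (k + d) + 1 := h'
        have e0 : (k + d) - k = d := by ring
        have e1 : ((k + d) + 1) - k = d + 1 := by ring
        rw [e0, e1]
        have hI := s18cI_step d
        have hs : (s18cI (d+1) : ℝ)/3^(a+1) - (s18cI d : ℝ)/3^(a+1) + 1/3^(a+1) ≤ 1/3^a := by
          rw [div_sub_div_same, ← add_div]
          apply s18div a a _ (by omega)
          rw [show a+1-a = 1 by omega]
          have : (s18cI (d+1) : ℝ) - (s18cI d : ℝ) ≤ 2 := by exact_mod_cast hI.2
          norm_num; linarith
        exact ⟨by linarith, Or.inl hs⟩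
    · by_cases hai' : a = i+1
      · subst hai'
        rw [s18phi_i1, s18phi_i1]
        rcases hxy with h' | h'
        · obtain ⟨e, rfl⟩ : ∃ e, x = 2*k + e := ⟨x - 2*k, by ring⟩
          obtain rfl : y = (2*k + e) + 1 := h'
          have e0 : (2*k + e) - 2*k = e := by ring
          have e1 : ((2*k + e) + 1) - 2*k = e + 1 := by ring
          rw [e0, e1]
          have hJ := s18cJ_step e
          have hfst : (s18cJ e : ℝ)/3^(i+1) - (s18cJ (e+1) : ℝ)/3^(i+1) ≤ 1/3^(i+1) := by
            rw [div_sub_div_same]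
            apply s18div i (i+1) _ le_rfl
            rw [show i+1-(i+1) = 0 by omega]
            have : (s18cJ e : ℝ) - (s18cJ (e+1) : ℝ) ≤ 1 := by exact_mod_cast hJ.1
            norm_num; linarith
          refine ⟨hfst, ?_⟩
          rcases s18cJ_stepA e with hs | ⟨he, he'⟩ | ⟨he, he'⟩
          · left
            rw [div_sub_div_same, ← add_div]
            apply s18div i (i+1) _ le_rfl
            rw [show i+1-(i+1) = 0 by omega]
            have : (s18cJ e : ℝ) - (s18cJ (e+1) : ℝ) ≤ 0 := by exact_mod_cast hs
            norm_num; linarith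
          · right; left
            exact Or.inr ⟨rfl, rfl, Or.inl ⟨e0.trans he, e1.trans he'⟩⟩
          · right; left
            exact Or.inr ⟨rfl, rfl, Or.inr (Or.inl ⟨e0.trans he, e1.trans he'⟩)⟩
        · obtain ⟨e, rfl⟩ : ∃ e, y = 2*k + e := ⟨y - 2*k, by ring⟩
          obtain rfl : x = (2*k + e) + 1 := h'
          have e0 : (2*k + e) - 2*k = e := by ring
          have e1 : ((2*k + e) + 1) - 2*k = e + 1 := by ring
          rw [e0, e1]
          have hJ := s18cJ_step e
          have hfst : (s18cJ (e+1) : ℝ)/3^(i+1) - (s18cJ e : ℝ)/3^(i+1) ≤ 1/3^(i+1) := by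
            rw [div_sub_div_same]
            apply s18div i (i+1) _ le_rfl
            rw [show i+1-(i+1) = 0 by omega]
            have : (s18cJ (e+1) : ℝ) - (s18cJ e : ℝ) ≤ 1 := by exact_mod_cast hJ.2
            norm_num; linarith
          refine ⟨hfst, ?_⟩
          rcases s18cJ_stepB e with hs | ⟨he, he'⟩ | ⟨he, he'⟩
          · left
            rw [div_sub_div_same, ← add_div]
            apply s18div i (i+1) _ le_rfl
            rw [show i+1-(i+1) = 0 by omega]
            have : (s18cJ (e+1) : ℝ) - (s18cJ e : ℝ) ≤ 0 := by exact_mod_cast hs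
            norm_num; linarith
          · right; left
            exact Or.inr ⟨rfl, rfl, Or.inr (Or.inr (Or.inl ⟨e1.trans he, e0.trans he'⟩))⟩
          · right; left
            exact Or.inr ⟨rfl, rfl, Or.inr (Or.inr (Or.inr ⟨e1.trans he, e0.trans he'⟩))⟩
      · rw [s18phi_other i a k x hai hai', s18phi_other i a k y hai hai']
        by_cases hd : a ≤ i+1
        · have hs : (0:ℝ) - 0 + 1/3^(i+1) ≤ 1/3^a := by
            rw [sub_zero, zero_add]
            apply s18div i a 1 (by omega)
            calc (1:ℝ) = 3^0 := by norm_num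
              _ ≤ 3^(i+1-a) := by
                  apply pow_le_pow_right₀ (by norm_num) (Nat.zero_le _)
          exact ⟨by linarith, Or.inl hs⟩
        · have hwpos : (0:ℝ) < 1/3^a := by positivity
          exact ⟨by linarith, Or.inr (Or.inr ⟨by omega, by omega⟩)⟩
  · -- cross edge, downward: b = a+1, y = 2x
    obtain rfl : b = a + 1 := hb
    obtain rfl : y = 2 * x := hy
    have hne : a ≠ a + 1 := by omega
    have hmin : min a (a+1) = a := min_eq_left (Nat.le_succ a)
    have hw : undirW18 (a,x) (a+1, 2*x) = 1/3^(a-1) := by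
      simp [undirW18, hne, hmin]
    rw [hw]
    by_cases hai : a = i
    · subst hai
      rw [s18phi_i, s18phi_i1]
      obtain ⟨d, rfl⟩ : ∃ d, x = k + d := ⟨x - k, by ring⟩
      have e0 : (k + d) - k = d := by ring
      have e1 : 2*(k + d) - 2*k = 2*d := by ring
      rw [e0, e1]
      have hc : (s18cI d : ℝ) - (s18cJ (2*d) : ℝ) = 9 := by exact_mod_cast s18cross d
      have hpow : (1:ℝ)/3^(a-1) = 9/3^(a+1) := by
        rw [div_eq_div_iff (by positivity) (by positivity),
          show a+1 = (a-1)+2 by omega, pow_add]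
        ring
      refine ⟨?_, Or.inr (Or.inl (Or.inl ⟨rfl, rfl⟩))⟩
      rw [div_sub_div_same, hc, hpow]
    · by_cases hai' : a + 1 = i
      · have hx0 : s18phi i k (a, x) = 0 := s18phi_other _ _ _ _ (by omega) (by omega)
        subst hai'
        rw [hx0, s18phi_i]
        have hge : (9:ℝ) ≤ (s18cI (2*x - k) : ℝ) := by exact_mod_cast s18cI_ge (2*x - k)
        have hwpos : (0:ℝ) < 1/3^(a-1) := by positivity
        have hmono : (1:ℝ)/3^(a+1+1) ≤ (s18cI (2*x - k) : ℝ)/3^(a+1+1) := by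
          gcongr
          linarith
        exact ⟨by linarith, Or.inl (by linarith)⟩
      · by_cases hai'' : a = i+1
        · subst hai''
          rw [s18phi_i1, s18phi_other i (i+1+1) k (2*x) (by omega) (by omega)]
          have hle : (s18cJ (x - 2*k) : ℝ) ≤ 2 := by exact_mod_cast s18cJ_le (x - 2*k)
          have hs : (s18cJ (x - 2*k) : ℝ)/3^(i+1) - 0 + 1/3^(i+1) ≤ 1/3^(i+1-1) := by
            rw [sub_zero, ← add_div, show i+1-1 = i by omega]
            apply s18div i i _ (by omega)
            rw [show i+1-i = 1 by omega]
            norm_num; linarith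
          exact ⟨by linarith, Or.inl hs⟩
        · rw [s18phi_other i a k x hai hai'',
            s18phi_other i (a+1) k (2*x) (by omega) (by omega)]
          by_cases hd : a ≤ i+2
          · have hs : (0:ℝ) - 0 + 1/3^(i+1) ≤ 1/3^(a-1) := by
              rw [sub_zero, zero_add]
              apply s18div i (a-1) 1 (by omega)
              calc (1:ℝ) = 3^0 := by norm_num
                _ ≤ 3^(i+1-(a-1)) := by
                    apply pow_le_pow_right₀ (by norm_num) (Nat.zero_le _)
            exact ⟨by linarith, Or.inl hs⟩
          · have hwpos : (0:ℝ) < 1/3^(a-1) := by positivity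
            exact ⟨by linarith, Or.inr (Or.inr ⟨by omega, by omega⟩)⟩
  · -- cross edge, upward: a = b+1, x = 2y
    obtain rfl : a = b + 1 := ha
    obtain rfl : x = 2 * y := hx
    have hne : b + 1 ≠ b := by omega
    have hmin : min (b+1) b = b := min_eq_right (Nat.le_succ b)
    have hw : undirW18 (b+1, 2*y) (b, y) = 1/3^(b-1) := by
      simp [undirW18, hne, hmin]
    rw [hw]
    by_cases hbi : b = i
    · subst hbi
      rw [s18phi_i1, s18phi_i]
      obtain ⟨d, rfl⟩ : ∃ d, y = k + d := ⟨y - k, by ring⟩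
      have e0 : (k + d) - k = d := by ring
      have e1 : 2*(k + d) - 2*k = 2*d := by ring
      rw [e0, e1]
      have hc : (s18cI d : ℝ) - (s18cJ (2*d) : ℝ) = 9 := by exact_mod_cast s18cross d
      have hpow : (1:ℝ)/3^(b-1) = 9/3^(b+1) := by
        rw [div_eq_div_iff (by positivity) (by positivity),
          show b+1 = (b-1)+2 by omega, pow_add]
        ring
      refine ⟨?_, Or.inl ?_⟩
      · rw [div_sub_div_same]
        apply s18div b (b-1) _ (by omega)
        rw [show b+1-(b-1) = 2 by omega]
        norm_num; linarith
      · rw [div_sub_div_same, ← add_div]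
        apply s18div b (b-1) _ (by omega)
        rw [show b+1-(b-1) = 2 by omega]
        norm_num; linarith
    · by_cases hbi' : b + 1 = i
      · have hy0 : s18phi i k (b, y) = 0 := s18phi_other _ _ _ _ (by omega) (by omega)
        subst hbi'
        rw [hy0, s18phi_i]
        have hle : (s18cI (2*y - k) : ℝ) ≤ 11 := by exact_mod_cast s18cI_le (2*y - k)
        have hs : (s18cI (2*y - k) : ℝ)/3^(b+1+1) - 0 + 1/3^(b+1+1) ≤ 1/3^(b-1) := by
          rw [sub_zero, ← add_div]
          apply s18div (b+1) (b-1) _ (by omega)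
          rw [show b+1+1-(b-1) = 3 by omega]
          norm_num; linarith
        exact ⟨by linarith, Or.inl hs⟩
      · by_cases hbi'' : b = i+1
        · subst hbi''
          rw [s18phi_other i (i+1+1) k (2*y) (by omega) (by omega), s18phi_i1]
          have hge : (0:ℝ) ≤ (s18cJ (y - 2*k) : ℝ) := by exact_mod_cast s18cJ_ge (y - 2*k)
          have hdivnn : (0:ℝ) ≤ (s18cJ (y - 2*k) : ℝ)/3^(i+1) := by positivity
          have hwpos : (0:ℝ) < 1/3^(i+1-1) := by positivity
          have hs : (0:ℝ) - (s18cJ (y - 2*k) : ℝ)/3^(i+1) + 1/3^(i+1) ≤ 1/3^(i+1-1) := by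
            rw [zero_sub, ← neg_div, ← add_div, show i+1-1 = i by omega]
            apply s18div i i _ (by omega)
            rw [show i+1-i = 1 by omega]
            norm_num; linarith
          exact ⟨by linarith, Or.inl hs⟩
        · rw [s18phi_other i (b+1) k (2*y) (by omega) (by omega),
            s18phi_other i b k y hbi hbi'']
          by_cases hd : b ≤ i+2
          · have hs : (0:ℝ) - 0 + 1/3^(i+1) ≤ 1/3^(b-1) := by
              rw [sub_zero, zero_add]
              apply s18div i (b-1) 1 (by omega)
              calc (1:ℝ) = 3^0 := by norm_num
                _ ≤ 3^(i+1-(b-1)) := by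
                    apply pow_le_pow_right₀ (by norm_num) (Nat.zero_le _)
            exact ⟨by linarith, Or.inl hs⟩
          · have hwpos : (0:ℝ) < 1/3^(b-1) := by positivity
            exact ⟨by linarith, Or.inr (Or.inr ⟨by omega, by omega⟩)⟩

lemma s18TenFst (i : ℕ) (k : Fin 5) {b : ℕ × Fin 5} {rest : List (ℕ × Fin 5)}
    (h : s18Ten i k (b :: rest)) : b.1 = i ∨ b.1 = i + 1 := by
  rcases h with h|h|h|h|h|h|h|h|h|h <;>
    (rw [List.cons.injEq] at h; obtain ⟨rfl, -⟩ := h) <;> simp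

lemma s18step (i : ℕ) (k : Fin 5) (a b : ℕ × Fin 5) (rest : List (ℕ × Fin 5))
    (ht : s18tight i k a b) (hT : s18Ten i k (b :: rest)) : s18Ten i k (a :: b :: rest) := by
  obtain ⟨a1, a2⟩ := a
  have tab := s18fin_tab k
  rcases hT with h|h|h|h|h|h|h|h|h|h <;>
    (rw [List.cons.injEq] at h; obtain ⟨rfl, rfl⟩ := h)
  · -- b = (i+1, 2k+2), rest = []
    rcases ht with ⟨ha1, hv⟩ | ⟨ha1, hb1, hp⟩
    · obtain rfl : a1 = i := ha1
      have h2 : 2*a2 = 2*k+2 := (congrArg Prod.snd hv).symm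
      have ha2 : a2 = k+1 := by rw [s18fin_solve _ _ h2, tab.1]
      subst ha2
      exact Or.inr (Or.inr (Or.inr (Or.inr (Or.inr (Or.inl rfl)))))
    · obtain rfl : a1 = i+1 := ha1
      have hv2 : (2*k+2 : Fin 5) - 2*k = 2 := by ring
      rcases hp with ⟨hu, hv⟩|⟨hu, hv⟩|⟨hu, hv⟩|⟨hu, hv⟩
      · exact absurd (hv.symm.trans hv2) (by decide)
      · obtain rfl : a2 = 2*k+1 := s18fin_sub _ _ _ hu
        exact Or.inr (Or.inl rfl)
      · obtain rfl : a2 = 2*k+3 := s18fin_sub _ _ _ hu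
        exact Or.inr (Or.inr (Or.inr (Or.inr (Or.inr (Or.inr (Or.inl rfl))))))
      · exact absurd (hv.symm.trans hv2) (by decide)
  · -- b = (i+1, 2k+1), rest = [t]
    rcases ht with ⟨ha1, hv⟩ | ⟨ha1, hb1, hp⟩
    · obtain rfl : a1 = i := ha1
      have h2 : 2*a2 = 2*k+1 := (congrArg Prod.snd hv).symm
      have ha2 : a2 = k+3 := by rw [s18fin_solve _ _ h2, tab.2.1]
      subst ha2
      exact Or.inr (Or.inr (Or.inr (Or.inr (Or.inl rfl))))
    · obtain rfl : a1 = i+1 := ha1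
      have hv2 : (2*k+1 : Fin 5) - 2*k = 1 := by ring
      rcases hp with ⟨hu, hv⟩|⟨hu, hv⟩|⟨hu, hv⟩|⟨hu, hv⟩
      · obtain rfl : a2 = 2*k := by
          have := s18fin_sub _ _ _ hu; simpa using this
        exact Or.inr (Or.inr (Or.inl rfl))
      · exact absurd (hv.symm.trans hv2) (by decide)
      · exact absurd (hv.symm.trans hv2) (by decide)
      · exact absurd (hv.symm.trans hv2) (by decide)
  · -- b = (i+1, 2k), rest = [b1, t]
    rcases ht with ⟨ha1, hv⟩ | ⟨ha1, hb1, hp⟩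
    · obtain rfl : a1 = i := ha1
      have h2 : 2*a2 = 2*k := (congrArg Prod.snd hv).symm
      have ha2 : a2 = k := by rw [s18fin_solve _ _ h2, tab.2.2.1]
      subst ha2
      exact Or.inr (Or.inr (Or.inr (Or.inl rfl)))
    · obtain rfl : a1 = i+1 := ha1
      have hv2 : (2*k : Fin 5) - 2*k = 0 := by ring
      rcases hp with ⟨hu, hv⟩|⟨hu, hv⟩|⟨hu, hv⟩|⟨hu, hv⟩
      · exact absurd (hv.symm.trans hv2) (by decide)
      · exact absurd (hv.symm.trans hv2) (by decide)
      · exact absurd (hv.symm.trans hv2) (by decide)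
      · exact absurd (hv.symm.trans hv2) (by decide)
  · -- b = (i, k) : no tight arc enters level i
    exfalso
    rcases ht with ⟨ha1, hv⟩ | ⟨ha1, hb1, hp⟩
    · have := congrArg Prod.fst hv; simp at this
    · simp at hb1
  · exfalso
    rcases ht with ⟨ha1, hv⟩ | ⟨ha1, hb1, hp⟩
    · have := congrArg Prod.fst hv; simp at this
    · simp at hb1
  · exfalso
    rcases ht with ⟨ha1, hv⟩ | ⟨ha1, hb1, hp⟩
    · have := congrArg Prod.fst hv; simp at this
    · simp at hb1
  · -- b = (i+1, 2k+3), rest = [t]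
    rcases ht with ⟨ha1, hv⟩ | ⟨ha1, hb1, hp⟩
    · obtain rfl : a1 = i := ha1
      have h2 : 2*a2 = 2*k+3 := (congrArg Prod.snd hv).symm
      have ha2 : a2 = k+4 := by rw [s18fin_solve _ _ h2, tab.2.2.2.1]
      subst ha2
      exact Or.inr (Or.inr (Or.inr (Or.inr (Or.inr (Or.inr (Or.inr (Or.inr (Or.inl rfl))))))))
    · obtain rfl : a1 = i+1 := ha1
      have hv2 : (2*k+3 : Fin 5) - 2*k = 3 := by ring
      rcases hp with ⟨hu, hv⟩|⟨hu, hv⟩|⟨hu, hv⟩|⟨hu, hv⟩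
      · exact absurd (hv.symm.trans hv2) (by decide)
      · exact absurd (hv.symm.trans hv2) (by decide)
      · exact absurd (hv.symm.trans hv2) (by decide)
      · obtain rfl : a2 = 2*k+4 := s18fin_sub _ _ _ hu
        exact Or.inr (Or.inr (Or.inr (Or.inr (Or.inr (Or.inr (Or.inr (Or.inl rfl)))))))
  · -- b = (i+1, 2k+4), rest = [c1, t]
    rcases ht with ⟨ha1, hv⟩ | ⟨ha1, hb1, hp⟩
    · obtain rfl : a1 = i := ha1
      have h2 : 2*a2 = 2*k+4 := (congrArg Prod.snd hv).symm
      have ha2 : a2 = k+2 := by rw [s18fin_solve _ _ h2, tab.2.2.2.2]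
      subst ha2
      exact Or.inr (Or.inr (Or.inr (Or.inr (Or.inr (Or.inr (Or.inr (Or.inr (Or.inr rfl))))))))
    · obtain rfl : a1 = i+1 := ha1
      have hv2 : (2*k+4 : Fin 5) - 2*k = 4 := by ring
      rcases hp with ⟨hu, hv⟩|⟨hu, hv⟩|⟨hu, hv⟩|⟨hu, hv⟩
      · exact absurd (hv.symm.trans hv2) (by decide)
      · exact absurd (hv.symm.trans hv2) (by decide)
      · exact absurd (hv.symm.trans hv2) (by decide)
      · exact absurd (hv.symm.trans hv2) (by decide)
  · exfalso
    rcases ht with ⟨ha1, hv⟩ | ⟨ha1, hb1, hp⟩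
    · have := congrArg Prod.fst hv; simp at this
    · simp at hb1
  · exfalso
    rcases ht with ⟨ha1, hv⟩ | ⟨ha1, hb1, hp⟩
    · have := congrArg Prod.fst hv; simp at this
    · simp at hb1

lemma s18key (m i : ℕ) (hi : 1 ≤ i) (k : Fin 5) :
    ∀ (q : List (ℕ × Fin 5)) (a : ℕ × Fin 5), IsPath (undirE m) (a :: q) →
      (a :: q).getLast? = some (i+1, 2*k+2) →
      s18phi i k a ≤ pathWeight undirW18 (a :: q) ∧
      (s18phi i k a + 1/3^(i+1) ≤ pathWeight undirW18 (a :: q) ∨ s18Ten i k (a :: q)) := by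
  intro q
  induction q with
  | nil =>
    intro a _ hlast
    have ha : a = (i+1, 2*k+2) := by simpa using hlast
    subst ha
    have hphi : s18phi i k (i+1, 2*k+2) = 0 := by
      rw [s18phi_i1]
      have h2 : (2*k+2 : Fin 5) - 2*k = 2 := by ring
      rw [h2, show s18cJ 2 = 0 from by decide]
      norm_num
    constructor
    · rw [hphi]; simp [pathWeight]
    · exact Or.inr (Or.inl rfl)
  | cons b rest ih =>
    intro a hp hlast
    obtain ⟨hab, hp'⟩ := hp
    have hlast' : (b :: rest).getLast? = some (i+1, 2*k+2) := by
      rwa [List.getLast?_cons_cons] at hlast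
    obtain ⟨ih1, ih2⟩ := ih b hp' hlast'
    obtain ⟨e1, e2⟩ := s18arc m i hi k a b hab
    have hw : pathWeight undirW18 (a :: b :: rest)
        = undirW18 a b + pathWeight undirW18 (b :: rest) := rfl
    rw [hw]
    constructor
    · linarith
    · rcases e2 with hs | ht | hdeep
      · left; linarith
      · rcases ih2 with hs' | hT
        · left; linarith
        · exact Or.inr (s18step i k a b rest ht hT)
      · rcases ih2 with hs' | hT
        · left; linarith
        · exfalso
          have := s18TenFst i k hT
          omega

/-- each canonical 3-edge path (cross edge from v_i^k to
v_{i+1}^{2k}, then two cycle edges of C_{i+1}) has weight 1/3^{i-1} + 2/3^{i+1}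
and is the unique (13/12)-approximate shortest path between its endpoints. -/
theorem stmt18 (m i : ℕ) (hi : 1 ≤ i) (him : i + 1 ≤ m) (k : Fin 5) :
    IsPath (undirE m)
      [((i, k) : ℕ × Fin 5), (i + 1, cross5 k), (i + 1, cross5 k + 1), (i + 1, cross5 k + 2)] ∧
    pathWeight undirW18
      [((i, k) : ℕ × Fin 5), (i + 1, cross5 k), (i + 1, cross5 k + 1), (i + 1, cross5 k + 2)]
        = 1 / 3 ^ (i - 1) + 2 / 3 ^ (i + 1) ∧
    ∀ q : List (ℕ × Fin 5), IsPath (undirE m) q →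
      q.head? = some ((i, k) : ℕ × Fin 5) →
      q.getLast? = some ((i + 1, cross5 k + 2) : ℕ × Fin 5) →
      q ≠ [((i, k) : ℕ × Fin 5), (i + 1, cross5 k), (i + 1, cross5 k + 1), (i + 1, cross5 k + 2)] →
      pathWeight undirW18 q > (13 / 12 : ℝ) * (1 / 3 ^ (i - 1) + 2 / 3 ^ (i + 1)) := by
  obtain ⟨n, rfl⟩ : ∃ n, i = n + 1 := ⟨i - 1, by omega⟩
  have hne12 : (n+1 : ℕ) ≠ n + 1 + 1 := by omega
  have hmin : min (n+1) (n+1+1) = n+1 := min_eq_left (Nat.le_succ _)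
  have hw1 : undirW18 (n+1, k) (n+1+1, cross5 k) = 1/3^n := by
    simp [undirW18, hne12, hmin]
  have hw2 : ∀ x y : Fin 5, undirW18 (n+1+1, x) (n+1+1, y) = 1/3^(n+1+1) := by
    intro x y; simp [undirW18]
  refine ⟨?_, ?_, ?_⟩
  · -- the canonical list is a path
    refine ⟨?_, ?_, ?_, trivial⟩
    · exact Or.inr (Or.inl ⟨rfl, by omega, him, rfl⟩)
    · exact Or.inl ⟨rfl, by omega, him, Or.inl rfl⟩
    · exact Or.inl ⟨rfl, by omega, him, Or.inl (by show cross5 k + 2 = (cross5 k + 1) + 1; ring)⟩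
  · -- weight computation
    show undirW18 (n+1, k) (n+1+1, cross5 k) +
        (undirW18 (n+1+1, cross5 k) (n+1+1, cross5 k + 1) +
          (undirW18 (n+1+1, cross5 k + 1) (n+1+1, cross5 k + 2) + 0)) = _
    rw [hw1, hw2, hw2]
    simp only [show n+1-1 = n from rfl, show n+1+1 = n+2 from rfl]
    ring
  · intro q hq hhead hlast hne
    cases q with
    | nil => simp [IsPath] at hq
    | cons a q' =>
      have ha : a = (n+1, k) := by simpa using hhead
      subst ha
      have hlast2 : ((n+1, k) :: q').getLast? = some (n+1+1, 2*k+2) := hlast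
      obtain ⟨k1, k2⟩ := s18key m (n+1) (by omega) k q' (n+1, k) hq hlast2
      have hphis : s18phi (n+1) k (n+1, k) = 11/3^(n+1+1) := by
        rw [s18phi_i, sub_self, show s18cI 0 = 11 from by decide]
        norm_num
      have h3 : (0:ℝ) < 3^n := by positivity
      have hpow : (3:ℝ)^(n+1+1) = 9 * 3^n := by ring
      rcases k2 with hsl | hT
      · -- slack case: weight at least 12/3^(n+2)
        rw [hphis, hpow] at hsl
        simp only [show n+1-1 = n from rfl]
        have h9 : (0:ℝ) < 9*3^n := by positivity
        have hlt : (13/12 : ℝ) * (1/3^n + 2/3^(n+1+1)) < 12/(9*3^n) := by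
          have hc : (13/12 : ℝ) * (1/3^n + 2/3^(n+1+1)) = (143/12)/(9*3^n) := by
            rw [hpow]; field_simp; ring
          rw [hc, div_lt_div_iff₀ h9 h9]
          nlinarith [h9]
        have h12 : (11:ℝ)/(9*3^n) + 1/(9*3^n) = 12/(9*3^n) := by ring
        linarith
      · -- tight case: the walk must be the canonical path, contradiction
        exfalso
        rcases hT with h|h|h|h|h|h|h|h|h|h
        · rw [List.cons.injEq] at h
          have := congrArg Prod.fst h.1; simp at this
        · rw [List.cons.injEq] at h
          have := congrArg Prod.fst h.1; simp at this
        · rw [List.cons.injEq] at h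
          have := congrArg Prod.fst h.1; simp at this
        · exact hne h
        · rw [List.cons.injEq] at h
          have := congrArg Prod.snd h.1
          exact absurd this.symm (s18fin_ne k).2.2.1
        · rw [List.cons.injEq] at h
          have := congrArg Prod.snd h.1
          exact absurd this.symm (s18fin_ne k).1
        · rw [List.cons.injEq] at h
          have := congrArg Prod.fst h.1; simp at this
        · rw [List.cons.injEq] at h
          have := congrArg Prod.fst h.1; simp at this
        · rw [List.cons.injEq] at h
          have := congrArg Prod.snd h.1
          exact absurd this.symm (s18fin_ne k).2.2.2
        · rw [List.cons.injEq] at h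
          have := congrArg Prod.snd h.1
          exact absurd this.symm (s18fin_ne k).2.1
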